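/- Let G be a locally compact unimodular group with Haar measure λ, let C ≥ 1, and let ϱ : G → [0,∞] be a measurable function satisfying ϱ(xy) ≤ C(ϱ(x) + ϱ(y)) for all x, y ∈ G. Then for every Borel probability measure μ on G and every n ≥ 1, the weak ϱ-moment of the n-fold convolution power satisfies W(ϱ, μ^(n)) ≤ n·(2C)^(n−1)·W(ϱ, μ). -/

import Mathlib

open MeasureTheory
open scoped ENNReal NNReal

/-- Convolution of two measures on a group: the pushforward of the product measure
under multiplication. -/
noncomputable def mconv {G : Type*} [Monoid G] [MeasurableSpace G]
    (μ ν : Measure G) : Measure G :=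
  (μ.prod ν).map fun p : G × G => p.1 * p.2

/-- `n`-fold convolution power of a measure (the 0th power is the Dirac mass at the
identity). -/
noncomputable def mconvPow {G : Type*} [Monoid G] [MeasurableSpace G]
    (μ : Measure G) : ℕ → Measure G
  | 0 => Measure.dirac 1
  | n + 1 => mconv (mconvPow μ n) μ

/-- The weak `ϱ`-moment `W(ϱ, μ) = sup_{s>0} s·μ({ϱ > s})` of a measure `μ`. -/
noncomputable def weakMoment {G : Type*} [MeasurableSpace G]
    (ϱ : G → ℝ≥0∞) (μ : Measure G) : ℝ≥0∞ :=
  ⨆ (s : ℝ≥0∞) (_ : 0 < s), s * μ {x | s < ϱ x}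

lemma le_weakMoment {G : Type*} [MeasurableSpace G]
    (ϱ : G → ℝ≥0∞) (μ : Measure G) (t : ℝ≥0∞) (ht : 0 < t) :
    t * μ {x | t < ϱ x} ≤ weakMoment ϱ μ :=
  le_iSup₂ (f := fun s (_ : 0 < s) => s * μ {x | s < ϱ x}) t ht

lemma weakMoment_zero {G : Type*} [MeasurableSpace G] (ϱ : G → ℝ≥0∞) :
    weakMoment ϱ (0 : Measure G) = 0 := by
  simp [weakMoment]

/-- Total mass of a convolution is at most the product of the total masses. -/
lemma mconv_univ_le {G : Type*} [Monoid G] [MeasurableSpace G]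
    (ν μ : Measure G) [SFinite μ] : mconv ν μ Set.univ ≤ ν Set.univ * μ Set.univ := by
  by_cases hmul : AEMeasurable (fun p : G × G => p.1 * p.2) (ν.prod μ)
  · rw [mconv, Measure.map_apply_of_aemeasurable hmul MeasurableSet.univ]
    calc (ν.prod μ) ((fun p : G × G => p.1 * p.2) ⁻¹' Set.univ)
        ≤ (ν.prod μ) Set.univ := measure_mono (Set.subset_univ _)
      _ ≤ ν Set.univ * μ Set.univ := by
          rw [← Set.univ_prod_univ]
          exact (Measure.prod_prod _ _).le
  · rw [mconv, Measure.map_of_not_aemeasurable hmul]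
    simp

/-- Convolution with the Dirac mass at the identity on the left is the identity. -/
lemma dirac_one_mconv' {G : Type*} [Monoid G] [MeasurableSpace G]
    (μ : Measure G) [SFinite μ] :
    mconv (Measure.dirac 1) μ = μ ∨ mconv (Measure.dirac 1) μ = 0 := by
  by_cases hmul : AEMeasurable (fun p : G × G => p.1 * p.2) ((Measure.dirac (1 : G)).prod μ)
  · left
    rw [Measure.dirac_prod] at hmul
    rw [mconv, Measure.dirac_prod]
    set g := fun p : G × G => p.1 * p.2 with hg
    have h1 : Measure.map g (μ.map (Prod.mk (1 : G)))
        = Measure.map (hmul.mk g) (μ.map (Prod.mk (1 : G))) :=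
      Measure.map_congr hmul.ae_eq_mk
    rw [h1, Measure.map_map hmul.measurable_mk measurable_prodMk_left]
    have h2 : (hmul.mk g ∘ Prod.mk (1 : G)) =ᵐ[μ] id := by
      have := MeasureTheory.ae_of_ae_map (measurable_prodMk_left.aemeasurable) hmul.ae_eq_mk
      filter_upwards [this] with y hy
      simp only [Function.comp_apply, id]
      rw [← hy]
      simp [g]
    rw [Measure.map_congr h2, Measure.map_id]
  · right
    rw [mconv, Measure.map_of_not_aemeasurable hmul]

/-- The key one-step estimate: `W(ϱ, ν ∗ μ) ≤ 2C (W(ϱ,ν) + W(ϱ,μ))`. -/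
lemma weakMoment_mconv_le {G : Type*} [Monoid G] [MeasurableSpace G]
    (C : ℝ≥0∞) (hC : 1 ≤ C) (hCtop : C ≠ ∞)
    (ϱ : G → ℝ≥0∞) (hϱ : Measurable ϱ)
    (hsub : ∀ x y : G, ϱ (x * y) ≤ C * (ϱ x + ϱ y))
    (ν μ : Measure G) (hν : ν Set.univ ≤ 1) [IsProbabilityMeasure μ] :
    weakMoment ϱ (mconv ν μ) ≤ 2 * C * (weakMoment ϱ ν + weakMoment ϱ μ) := by
  have hνfin : IsFiniteMeasure ν := ⟨lt_of_le_of_lt hν ENNReal.one_lt_top⟩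
  by_cases hmul : AEMeasurable (fun p : G × G => p.1 * p.2) (ν.prod μ)
  · rw [weakMoment]
    refine iSup₂_le fun s hs => ?_
    rcases eq_or_ne s ∞ with rfl | hstop
    · have he : {x | (⊤ : ℝ≥0∞) < ϱ x} = ∅ := by
        ext x; simp
      simp [he]
    have h2C0 : (2 * C : ℝ≥0∞) ≠ 0 := by
      simp only [ne_eq, mul_eq_zero, OfNat.ofNat_ne_zero, false_or]
      exact fun h => by simp [h] at hC
    have h2Ctop : (2 * C : ℝ≥0∞) ≠ ∞ := ENNReal.mul_ne_top (by simp) hCtop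
    set t := s / (2 * C) with htdef
    have hts : 2 * C * t = s := ENNReal.mul_div_cancel h2C0 h2Ctop
    have htpos : 0 < t := ENNReal.div_pos hs.ne' h2Ctop
    set A := {x | t < ϱ x} with hA
    have hAmeas : MeasurableSet A := measurableSet_lt measurable_const hϱ
    have hsubset : (fun p : G × G => p.1 * p.2) ⁻¹' {x | s < ϱ x} ⊆
        (A ×ˢ Set.univ) ∪ (Set.univ ×ˢ A) := by
      rintro ⟨x, y⟩ hxy
      simp only [Set.mem_preimage, Set.mem_setOf_eq] at hxy
      by_contra h
      simp only [Set.mem_union, Set.mem_prod, Set.mem_univ, and_true, true_and, hA,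
        Set.mem_setOf_eq, not_or, not_lt] at h
      have : ϱ (x * y) ≤ s := by
        calc ϱ (x * y) ≤ C * (ϱ x + ϱ y) := hsub x y
          _ ≤ C * (t + t) := by gcongr; exacts [h.1, h.2]
          _ = 2 * C * t := by ring
          _ = s := hts
      exact absurd hxy (not_lt.2 this)
    have hmeasS : MeasurableSet {x | s < ϱ x} := measurableSet_lt measurable_const hϱ
    rw [mconv, Measure.map_apply_of_aemeasurable hmul hmeasS]
    calc s * (ν.prod μ) ((fun p : G × G => p.1 * p.2) ⁻¹' {x | s < ϱ x})
        ≤ s * ((ν.prod μ) (A ×ˢ Set.univ) + (ν.prod μ) (Set.univ ×ˢ A)) := by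
          gcongr
          exact (measure_mono hsubset).trans (measure_union_le _ _)
      _ = s * (ν A * μ Set.univ + ν Set.univ * μ A) := by
          rw [Measure.prod_prod, Measure.prod_prod]
      _ ≤ s * (ν A + μ A) := by
          gcongr
          · rw [measure_univ, mul_one]
          · calc ν Set.univ * μ A ≤ 1 * μ A := by gcongr
              _ = μ A := one_mul _
      _ = 2 * C * (t * ν A) + 2 * C * (t * μ A) := by
          rw [← hts]; ring
      _ ≤ 2 * C * weakMoment ϱ ν + 2 * C * weakMoment ϱ μ := by
          gcongr
          · exact le_weakMoment ϱ ν t htpos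
          · exact le_weakMoment ϱ μ t htpos
      _ = 2 * C * (weakMoment ϱ ν + weakMoment ϱ μ) := by ring
  · rw [mconv, Measure.map_of_not_aemeasurable hmul, weakMoment_zero]
    exact zero_le

/-- On a locally compact unimodular group, if `ϱ(xy) ≤ C(ϱ(x)+ϱ(y))`, then
for every probability measure `μ` and `n ≥ 1`, `W(ϱ, μ^(n)) ≤ n (2C)^(n-1) W(ϱ, μ)`. -/
theorem convPow_weakMoment_le
    {G : Type*} [TopologicalSpace G] [Group G] [IsTopologicalGroup G]
    [LocallyCompactSpace G] [MeasurableSpace G] [BorelSpace G]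
    (lam : Measure G) [lam.IsHaarMeasure] [lam.IsMulRightInvariant]
    (C : ℝ≥0) (hC : 1 ≤ C)
    (ϱ : G → ℝ≥0∞) (hϱ : Measurable ϱ)
    (hsub : ∀ x y : G, ϱ (x * y) ≤ (C : ℝ≥0∞) * (ϱ x + ϱ y))
    (μ : Measure G) [IsProbabilityMeasure μ]
    (n : ℕ) (hn : 1 ≤ n) :
    weakMoment ϱ (mconvPow μ n) ≤ (n : ℝ≥0∞) * (2 * (C : ℝ≥0∞)) ^ (n - 1) * weakMoment ϱ μ := by
  have hC' : (1 : ℝ≥0∞) ≤ (C : ℝ≥0∞) := by exact_mod_cast hC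
  have hCtop : (C : ℝ≥0∞) ≠ ∞ := ENNReal.coe_ne_top
  -- total mass bound
  have hmass : ∀ m : ℕ, mconvPow μ m Set.univ ≤ 1 := by
    intro m
    induction m with
    | zero => simp [mconvPow]
    | succ m ih =>
        calc mconvPow μ (m + 1) Set.univ
            ≤ mconvPow μ m Set.univ * μ Set.univ := mconv_univ_le _ _
          _ ≤ 1 * 1 := by gcongr; exact measure_univ.le
          _ = 1 := one_mul 1
  induction n, hn using Nat.le_induction with
  | base =>
      rcases dirac_one_mconv' μ with h | h
      · show weakMoment ϱ (mconv (Measure.dirac 1) μ) ≤ _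
        rw [h]
        simp
      · show weakMoment ϱ (mconv (Measure.dirac 1) μ) ≤ _
        rw [h, weakMoment_zero]
        exact zero_le
  | succ n hn ih =>
      have hstep := weakMoment_mconv_le (C : ℝ≥0∞) hC' hCtop ϱ hϱ hsub
        (mconvPow μ n) μ (hmass n)
      have h2C : (1 : ℝ≥0∞) ≤ 2 * (C : ℝ≥0∞) := by
        calc (1 : ℝ≥0∞) ≤ C := hC'
          _ ≤ 2 * C := by
              nth_rewrite 1 [← one_mul (C : ℝ≥0∞)]
              gcongr
              exact one_le_two
      have hn1 : n - 1 + 1 = n := Nat.succ_pred_eq_of_pos hn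
      calc weakMoment ϱ (mconvPow μ (n + 1))
          = weakMoment ϱ (mconv (mconvPow μ n) μ) := rfl
        _ ≤ 2 * (C : ℝ≥0∞) * (weakMoment ϱ (mconvPow μ n) + weakMoment ϱ μ) := hstep
        _ ≤ 2 * (C : ℝ≥0∞) *
            ((n : ℝ≥0∞) * (2 * (C : ℝ≥0∞)) ^ (n - 1) * weakMoment ϱ μ + weakMoment ϱ μ) := by
            gcongr
        _ = (n : ℝ≥0∞) * (2 * (C : ℝ≥0∞)) ^ (n - 1 + 1) * weakMoment ϱ μ
            + 2 * (C : ℝ≥0∞) * weakMoment ϱ μ := by ring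
        _ ≤ (n : ℝ≥0∞) * (2 * (C : ℝ≥0∞)) ^ n * weakMoment ϱ μ
            + (2 * (C : ℝ≥0∞)) ^ n * weakMoment ϱ μ := by
            rw [hn1]
            gcongr
            exact le_self_pow₀ h2C (by omega)
        _ = ((n : ℝ≥0∞) + 1) * (2 * (C : ℝ≥0∞)) ^ n * weakMoment ϱ μ := by ring
        _ = ((n + 1 : ℕ) : ℝ≥0∞) * (2 * (C : ℝ≥0∞)) ^ (n + 1 - 1) * weakMoment ϱ μ := by
            push_cast
            rfl
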